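/- For every integer d ≤ 1, μ_1(d) = (1/2)^{2-d}, and μ_1(d) = 0 for d ≥ 2. -/

import Mathlib

open Filter

/-- Binary sum-of-digits function. -/
def s2 (n : ℕ) : ℕ := (Nat.digits 2 n).sum

/-- `hasDensity a d x` means `{n : s₂(n+a) - s₂(n) = d}` has asymptotic density `x`. -/
def hasDensity (a : ℕ) (d : ℤ) (x : ℝ) : Prop :=
  Tendsto (fun N : ℕ =>
      (((Finset.range N).filter (fun n => (s2 (n + a) : ℤ) - s2 n = d)).card : ℝ) / N)
    atTop (nhds x)

lemma s2_succ (n : ℕ) : s2 (n + 1) + padicValNat 2 (n + 1) = s2 n + 1 := by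
  have h1 : padicValNat 2 (Nat.factorial n) = n - s2 n := by
    have := sub_one_mul_padicValNat_factorial (p := 2) n
    simpa [s2] using this
  have h2 : padicValNat 2 (Nat.factorial (n + 1)) = (n + 1) - s2 (n + 1) := by
    have := sub_one_mul_padicValNat_factorial (p := 2) (n + 1)
    simpa [s2] using this
  have h3 : padicValNat 2 (Nat.factorial (n + 1)) =
      padicValNat 2 (n + 1) + padicValNat 2 (Nat.factorial n) := by
    rw [Nat.factorial_succ, padicValNat.mul (by omega) (Nat.factorial_ne_zero n)]
  have hb1 : s2 n ≤ n := Nat.digit_sum_le 2 n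
  have hb2 : s2 (n + 1) ≤ n + 1 := Nat.digit_sum_le 2 (n + 1)
  omega

lemma padicValNat_two_eq_iff (k m : ℕ) (hm : m ≠ 0) :
    padicValNat 2 m = k ↔ m % 2 ^ (k + 1) = 2 ^ k := by
  have hpow : (0:ℕ) < 2 ^ k := by positivity
  have hdd : (2:ℕ) ^ k ∣ 2 ^ (k + 1) := pow_dvd_pow 2 (by omega)
  have hps : (2:ℕ) ^ (k + 1) = 2 * 2 ^ k := by ring
  constructor
  · rintro rfl
    have h1 : 2 ^ padicValNat 2 m ∣ m := pow_padicValNat_dvd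
    have h2 : ¬ 2 ^ (padicValNat 2 m + 1) ∣ m := pow_succ_padicValNat_not_dvd hm
    set k := padicValNat 2 m
    set r := m % 2 ^ (k + 1) with hr
    have hrk : r % 2 ^ k = 0 := by
      rw [hr, Nat.mod_mod_of_dvd m hdd]
      exact Nat.dvd_iff_mod_eq_zero.mp h1
    have hrne : r ≠ 0 := fun h0 => h2 ((Nat.dvd_iff_mod_eq_zero.mpr h0))
    have hrlt : r < 2 ^ (k + 1) := Nat.mod_lt m (by positivity)
    have hdvd_r : 2 ^ k ∣ r := Nat.dvd_iff_mod_eq_zero.mpr hrk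
    have hle : 2 ^ k ≤ r := Nat.le_of_dvd (by omega) hdvd_r
    have hsub : 2 ^ k ∣ (r - 2 ^ k) := Nat.dvd_sub hdvd_r dvd_rfl
    have := Nat.eq_zero_of_dvd_of_lt hsub (by omega)
    omega
  · intro h
    have hk1 : 2 ^ k ∣ m := by
      rw [Nat.dvd_iff_mod_eq_zero, ← Nat.mod_mod_of_dvd m hdd, h, Nat.mod_self]
    have hk2 : ¬ 2 ^ (k + 1) ∣ m := by
      intro hd
      rw [Nat.dvd_iff_mod_eq_zero.mp hd] at h
      omega
    have hA : k ≤ padicValNat 2 m := (padicValNat_dvd_iff_le hm).mp hk1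
    have hB : ¬ (k + 1 ≤ padicValNat 2 m) := fun hle => hk2 ((padicValNat_dvd_iff_le hm).mpr hle)
    omega

lemma succ_mod_iff (k n : ℕ) :
    (n + 1) % 2 ^ (k + 1) = 2 ^ k ↔ n % 2 ^ (k + 1) = 2 ^ k - 1 := by
  have h1 : (0:ℕ) < 2 ^ k := by positivity
  have h2 : (2:ℕ) ^ (k + 1) = 2 * 2 ^ k := by ring
  have hmod : n % 2 ^ (k + 1) < 2 ^ (k + 1) := Nat.mod_lt n (by positivity)
  have hadd : (n + 1) % 2 ^ (k + 1) = (n % 2 ^ (k + 1) + 1) % 2 ^ (k + 1) := by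
    conv_lhs => rw [Nat.add_mod, Nat.mod_eq_of_lt (show 1 < 2 ^ (k + 1) by omega)]
  rcases eq_or_lt_of_le (Nat.succ_le_of_lt hmod) with heq | hlt
  · have heq' : n % 2 ^ (k + 1) + 1 = 2 ^ (k + 1) := by omega
    have hz : (n + 1) % 2 ^ (k + 1) = 0 := by rw [hadd, heq', Nat.mod_self]
    omega
  · have hz : (n + 1) % 2 ^ (k + 1) = n % 2 ^ (k + 1) + 1 := by
      rw [hadd, Nat.mod_eq_of_lt hlt]
    omega

lemma density_mod (M v : ℕ) (hM : 0 < M) (hv : v < M) :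
    Tendsto (fun N : ℕ => (((Finset.range N).filter (fun x => x % M = v)).card : ℝ) / N)
      atTop (nhds (1 / (M : ℝ))) := by
  have hcard : ∀ N : ℕ, (((Finset.range N).filter (fun x => x % M = v)).card : ℝ)
      = ((⌈((N : ℚ) - v) / M⌉ : ℤ) : ℝ) := by
    intro N
    have h := Nat.count_modEq_card_eq_ceil N hM v
    rw [Nat.count_eq_card_filter_range] at h
    have hset : (Finset.range N).filter (fun x => x ≡ v [MOD M])
        = (Finset.range N).filter (fun x => x % M = v) := by
      apply Finset.filter_congr
      intro x _
      simp [Nat.ModEq, Nat.mod_eq_of_lt hv]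
    rw [hset, Nat.mod_eq_of_lt hv] at h
    exact_mod_cast congrArg (fun z : ℤ => (z : ℝ)) h
  rw [← tendsto_sub_nhds_zero_iff]
  refine squeeze_zero_norm' ?_ tendsto_one_div_atTop_nhds_zero_nat
  · filter_upwards [eventually_ge_atTop 1] with N hN
    have hN' : (0 : ℝ) < N := by exact_mod_cast hN
    have hM' : (0 : ℝ) < M := by exact_mod_cast hM
    have hMQ : (0 : ℚ) < M := by exact_mod_cast hM
    set c : ℤ := ⌈((N : ℚ) - v) / M⌉ with hc
    have hc1 : ((N : ℚ) - v) / M ≤ c := Int.le_ceil _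
    have hc2 : (c : ℚ) < ((N : ℚ) - v) / M + 1 := Int.ceil_lt_add_one _
    have hA : (N : ℚ) - v ≤ c * M := (div_le_iff₀ hMQ).mp hc1
    have hB : (c : ℚ) * M < (N : ℚ) - v + M := by
      have h3 : ((c : ℚ) - 1) * M < (N : ℚ) - v := by
        rw [← lt_div_iff₀ hMQ]; linarith
      nlinarith
    have hAR : (N : ℝ) - v ≤ (c : ℝ) * M := by exact_mod_cast hA
    have hBR : (c : ℝ) * M < (N : ℝ) - v + M := by exact_mod_cast hB
    have hvR : (v : ℝ) < M := by exact_mod_cast hv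
    have hv0 : (0 : ℝ) ≤ v := by positivity
    rw [hcard N, Real.norm_eq_abs]
    have e1 : (c : ℝ) / N - 1 / M = ((c : ℝ) * M - N) / (N * M) := by
      field_simp
    have habs : |(c : ℝ) * M - N| ≤ M := by
      rw [abs_le]; constructor <;> nlinarith
    have e2 : |(c : ℝ) / N - 1 / M| = |(c : ℝ) * M - N| / (N * M) := by
      rw [e1, abs_div, abs_of_pos (mul_pos hN' hM')]
    rw [e2]
    have e3 : (1 : ℝ) / N = M / (N * M) := by
      rw [mul_comm]; field_simp
    rw [e3]
    exact div_le_div_of_nonneg_right habs (mul_pos hN' hM').le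

theorem mu_one_formula :
    (∀ d : ℤ, d ≤ 1 → hasDensity 1 d ((1 / 2 : ℝ) ^ (2 - d))) ∧
    (∀ d : ℤ, 2 ≤ d → hasDensity 1 d 0) := by
  constructor
  · intro d hd
    set k := (1 - d).toNat with hkdef
    have hk : (k : ℤ) = 1 - d := Int.toNat_of_nonneg (by omega)
    have h1 : (0:ℕ) < 2 ^ k := by positivity
    have h2 : (2:ℕ) ^ (k + 1) = 2 * 2 ^ k := by ring
    have hfun : ∀ N : ℕ, (Finset.range N).filter (fun n => (s2 (n + 1) : ℤ) - s2 n = d)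
        = (Finset.range N).filter (fun n => n % 2 ^ (k + 1) = 2 ^ k - 1) := by
      intro N
      apply Finset.filter_congr
      intro n _
      have h := s2_succ n
      have hne : n + 1 ≠ 0 := by omega
      constructor
      · intro hcon
        have hval : padicValNat 2 (n + 1) = k := by omega
        exact (succ_mod_iff k n).mp ((padicValNat_two_eq_iff k (n + 1) hne).mp hval)
      · intro hcon
        have hval := (padicValNat_two_eq_iff k (n + 1) hne).mpr ((succ_mod_iff k n).mpr hcon)
        omega
    have hx : ((1 / 2 : ℝ) ^ (2 - d)) = 1 / ((2 ^ (k + 1) : ℕ) : ℝ) := by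
      have he : (2 : ℤ) - d = ((k + 1 : ℕ) : ℤ) := by push_cast; omega
      rw [he, zpow_natCast]
      rw [div_pow, one_pow]
      push_cast
      ring
    unfold hasDensity
    have hfun2 : (fun N : ℕ =>
        (((Finset.range N).filter (fun n => (s2 (n + 1) : ℤ) - s2 n = d)).card : ℝ) / N)
        = (fun N : ℕ =>
        (((Finset.range N).filter (fun n => n % 2 ^ (k + 1) = 2 ^ k - 1)).card : ℝ) / N) := by
      funext N
      rw [hfun N]
    rw [hfun2, hx]
    exact density_mod (2 ^ (k + 1)) (2 ^ k - 1) (by positivity) (by omega)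
  · intro d hd
    unfold hasDensity
    have hfun : ∀ N : ℕ, (Finset.range N).filter (fun n => (s2 (n + 1) : ℤ) - s2 n = d) = ∅ := by
      intro N
      apply Finset.filter_false_of_mem
      intro n _
      have h := s2_succ n
      omega
    have hfun2 : (fun N : ℕ =>
        (((Finset.range N).filter (fun n => (s2 (n + 1) : ℤ) - s2 n = d)).card : ℝ) / N)
        = (fun N : ℕ => (0 : ℝ)) := by
      funext N
      rw [hfun N]
      simp
    rw [hfun2]
    exact tendsto_const_nhds
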